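/- Let p be a prime and t ≥ 2. There exists a collection C of pairs of subsets of F_p^t with |C| ≤ p^{2t(t^{p-1}+p-1)}, such that every pair (C1,C2) ∈ C satisfies |C1|·|C2| ≤ p^{t+2}, and for every pair (A1, A2) of subsets of F_p^t with ⟨v1,v2⟩ ≠ 0 for all v1 ∈ A1, v2 ∈ A2, there exists (C1,C2) ∈ C with A1 ⊆ C1 and A2 ⊆ C2. -/

import Mathlib

/-- The inner product `⟨x,y⟩ = ∑ i, x i * y i`. -/
def ip {F : Type*} [CommRing F] {ι : Type*} [Fintype ι] (x y : ι → F) : F :=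
  ∑ i, x i * y i

open Finset

section Aux

variable {p : ℕ} [Fact p.Prime]

lemma ip_comm {F : Type*} [CommRing F] {ι : Type*} [Fintype ι] (x y : ι → F) :
    ip x y = ip y x := by simp [ip, mul_comm]

/-- `ip · b` as a linear map. -/
def ipL {F : Type*} [CommRing F] {ι : Type*} [Fintype ι] (b : ι → F) :
    (ι → F) →ₗ[F] F where
  toFun a := ip a b
  map_add' x y := by simp [ip, add_mul, Finset.sum_add_distrib]
  map_smul' c x := by simp [ip, Finset.mul_sum, mul_assoc]

lemma ipL_apply {F : Type*} [CommRing F] {ι : Type*} [Fintype ι] (b a : ι → F) :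
    ipL b a = ip a b := rfl

lemma ip_single {F : Type*} [CommRing F] {ι : Type*} [Fintype ι] [DecidableEq ι]
    (i : ι) (b : ι → F) : ip (Pi.single i (1 : F)) b = b i := by
  rw [ip, Finset.sum_eq_single i]
  · simp
  · intro j _ hj; simp [Pi.single_apply, hj]
  · simp

lemma ip_zero_right {F : Type*} [CommRing F] {ι : Type*} [Fintype ι] (a : ι → F) :
    ip a 0 = 0 := by simp [ip]

end Aux

section Count

variable {p : ℕ} [Fact p.Prime] {t : ℕ}

lemma ipL_surjective {b : Fin t → ZMod p} (hb : b ≠ 0) :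
    Function.Surjective (ipL b) := by
  intro c
  obtain ⟨i, hi⟩ : ∃ i, b i ≠ 0 := by
    by_contra hcon
    push_neg at hcon
    exact hb (funext hcon)
  refine ⟨(c * (b i)⁻¹) • (Pi.single i 1 : Fin t → ZMod p), ?_⟩
  rw [map_smul, ipL_apply, ip_single]
  rw [smul_eq_mul]
  field_simp

lemma finrank_ker_ipL {b : Fin t → ZMod p} (hb : b ≠ 0) :
    Module.finrank (ZMod p) (LinearMap.ker (ipL b)) = t - 1 := by
  have h1 := (ipL b).finrank_range_add_finrank_ker
  rw [LinearMap.range_eq_top.mpr (ipL_surjective hb), finrank_top,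
    Module.finrank_self, Module.finrank_pi, Fintype.card_fin] at h1
  omega

lemma card_ip_zero {b : Fin t → ZMod p} (hb : b ≠ 0) :
    (univ.filter fun a => ip a b = 0).card = p ^ (t - 1) := by
  classical
  rw [← Fintype.card_subtype]
  have e : {a // ip a b = 0} ≃ LinearMap.ker (ipL b) :=
    Equiv.subtypeEquivRight (fun a => by simp [LinearMap.mem_ker, ipL_apply])
  rw [Fintype.card_congr e, Module.card_eq_pow_finrank (K := ZMod p), ZMod.card,
    finrank_ker_ipL hb]

lemma ker_eq_of_proportional {b b' : Fin t → ZMod p} (hb : b ≠ 0)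
    (hker : LinearMap.ker (ipL b) = LinearMap.ker (ipL b')) :
    ∃ lam : ZMod p, b' = lam • b := by
  obtain ⟨i, hi⟩ : ∃ i, b i ≠ 0 := by
    by_contra hcon
    push_neg at hcon
    exact hb (funext hcon)
  refine ⟨b' i * (b i)⁻¹, funext fun j => ?_⟩
  have haj : ((b j) • (Pi.single i 1 : Fin t → ZMod p) - (b i) • (Pi.single j 1 : Fin t → ZMod p)) ∈
      LinearMap.ker (ipL b) := by
    rw [LinearMap.mem_ker, map_sub, map_smul, map_smul, ipL_apply, ipL_apply,
      ip_single, ip_single]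
    simp [mul_comm]
  rw [hker, LinearMap.mem_ker, map_sub, map_smul, map_smul, ipL_apply, ipL_apply,
    ip_single, ip_single, sub_eq_zero, smul_eq_mul, smul_eq_mul] at haj
  have : b' j * (b i) = b' i * b j := by linear_combination -haj
  rw [Pi.smul_apply, smul_eq_mul]
  field_simp
  linear_combination this

lemma card_ip_zero_pair {b b' : Fin t → ZMod p} (hb : b ≠ 0) (hb' : b' ≠ 0)
    (hprop : ∀ lam : ZMod p, b' ≠ lam • b) :
    (univ.filter fun a => ip a b = 0 ∧ ip a b' = 0).card = p ^ (t - 2) := by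
  classical
  have hkerne : LinearMap.ker (ipL b) ≠ LinearMap.ker (ipL b') := by
    intro hco
    obtain ⟨lam, hl⟩ := ker_eq_of_proportional hb hco
    exact hprop lam hl
  have hfr1 := finrank_ker_ipL hb
  have hfr2 := finrank_ker_ipL hb'
  have hsup : LinearMap.ker (ipL b) < LinearMap.ker (ipL b) ⊔ LinearMap.ker (ipL b') := by
    rcases lt_or_eq_of_le (le_sup_left : LinearMap.ker (ipL b) ≤ _) with h | h
    · exact h
    · exfalso
      have hle : LinearMap.ker (ipL b') ≤ LinearMap.ker (ipL b) := by
        rw [h]; exact le_sup_right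
      exact hkerne (Submodule.eq_of_le_of_finrank_le hle (by omega)).symm
  have hsupfr : Module.finrank (ZMod p) ↥(LinearMap.ker (ipL b) ⊔ LinearMap.ker (ipL b'))
      = t := by
    have h1 := Submodule.finrank_lt_finrank_of_lt hsup
    have h2 := Submodule.finrank_le (LinearMap.ker (ipL b) ⊔ LinearMap.ker (ipL b'))
    rw [Module.finrank_pi, Fintype.card_fin] at h2
    have ht1 : 1 ≤ t := by
      rcases Nat.eq_zero_or_pos t with h | h
      · exfalso; apply hb; subst h; exact funext fun j => absurd j.2 (by omega)
      · exact h
    omega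
  have hinf := Submodule.finrank_sup_add_finrank_inf_eq
    (LinearMap.ker (ipL b)) (LinearMap.ker (ipL b'))
  rw [hsupfr, hfr1, hfr2] at hinf
  have ht1 : 1 ≤ t := by
    rcases Nat.eq_zero_or_pos t with h | h
    · exfalso; apply hb; subst h; exact funext fun j => absurd j.2 (by omega)
    · exact h
  rw [← Fintype.card_subtype]
  have e : {a // ip a b = 0 ∧ ip a b' = 0} ≃
      ↥(LinearMap.ker (ipL b) ⊓ LinearMap.ker (ipL b')) :=
    Equiv.subtypeEquivRight (fun a => by
      simp [Submodule.mem_inf, LinearMap.mem_ker, ipL_apply])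
  rw [Fintype.card_congr e, Module.card_eq_pow_finrank (K := ZMod p), ZMod.card]
  congr 1
  omega

end Count

section Cross

variable {p : ℕ} [Fact p.Prime] {t : ℕ}

lemma cross_bound (ht : 2 ≤ t) (A B : Finset (Fin t → ZMod p))
    (h : ∀ a ∈ A, ∀ b ∈ B, ip a b ≠ 0) :
    A.card * B.card ≤ p ^ (t + 2) := by
  classical
  rcases A.eq_empty_or_nonempty with hA | ⟨a₀, ha₀⟩
  · subst hA; simp
  rcases B.eq_empty_or_nonempty with hB | hBne
  · subst hB; simp
  have hp2 : 2 ≤ p := (Fact.out : p.Prime).two_le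
  have hB0 : ∀ b ∈ B, b ≠ 0 := by
    intro b hb h0
    exact h a₀ ha₀ b hb (by rw [h0, ip_zero_right])
  set N : (Fin t → ZMod p) → ℕ := fun a => (B.filter fun b => ip a b = 0).card with hN
  have hNA : ∀ a ∈ A, N a = 0 := by
    intro a ha
    simp only [hN, Finset.card_eq_zero, Finset.filter_eq_empty_iff]
    exact fun {b} hb => h a ha b hb
  -- first moment
  have hS1 : ∑ a : Fin t → ZMod p, N a = B.card * p ^ (t - 1) := by
    have h1 : ∀ a, N a = ∑ b ∈ B, if ip a b = 0 then 1 else 0 := fun a => Finset.card_filter _ _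
    simp only [h1]
    rw [Finset.sum_comm]
    rw [Finset.sum_congr rfl (fun b hb => ?_), Finset.sum_const, smul_eq_mul]
    rw [← Finset.card_filter, card_ip_zero (hB0 b hb)]
  -- second moment
  have hS2 : ∑ a : Fin t → ZMod p, (N a) ^ 2
      ≤ B.card * ((p - 1) * p ^ (t - 1) + B.card * p ^ (t - 2)) := by
    have hsq : ∀ a, (N a) ^ 2 = ∑ b ∈ B, ∑ b' ∈ B,
        if ip a b = 0 ∧ ip a b' = 0 then 1 else 0 := by
      intro a
      have h1 : N a = ∑ b ∈ B, if ip a b = 0 then 1 else 0 := Finset.card_filter _ _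
      rw [sq, h1, Finset.sum_mul_sum]
      refine Finset.sum_congr rfl fun b _ => Finset.sum_congr rfl fun b' _ => ?_
      by_cases h1 : ip a b = 0 <;> by_cases h2 : ip a b' = 0 <;> simp [h1, h2]
    simp only [hsq]
    rw [Finset.sum_comm]
    have hswap : ∀ b ∈ B, ∑ a : Fin t → ZMod p, ∑ b' ∈ B,
        (if ip a b = 0 ∧ ip a b' = 0 then 1 else 0)
        ≤ (p - 1) * p ^ (t - 1) + B.card * p ^ (t - 2) := by
      intro b hb
      rw [Finset.sum_comm]
      have hcnt : ∀ b' ∈ B, (∑ a : Fin t → ZMod p,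
          if ip a b = 0 ∧ ip a b' = 0 then 1 else 0)
          = (univ.filter fun a => ip a b = 0 ∧ ip a b' = 0).card := by
        intro b' _
        rw [Finset.card_filter]
      rw [Finset.sum_congr rfl hcnt]
      rw [← Finset.sum_filter_add_sum_filter_not B (fun b' => ∃ lam : ZMod p, b' = lam • b)]
      have hbd1 : ∑ b' ∈ B.filter (fun b' => ∃ lam : ZMod p, b' = lam • b),
          (univ.filter fun a => ip a b = 0 ∧ ip a b' = 0).card
          ≤ (p - 1) * p ^ (t - 1) := by
        calc ∑ b' ∈ B.filter (fun b' => ∃ lam : ZMod p, b' = lam • b),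
            (univ.filter fun a => ip a b = 0 ∧ ip a b' = 0).card
            ≤ ∑ _b' ∈ B.filter (fun b' => ∃ lam : ZMod p, b' = lam • b), p ^ (t - 1) := by
              refine Finset.sum_le_sum fun b' _ => ?_
              rw [← card_ip_zero (hB0 b hb)]
              exact Finset.card_le_card
                (Finset.monotone_filter_right _ (fun a _ => And.left))
          _ ≤ (p - 1) * p ^ (t - 1) := by
              rw [Finset.sum_const, smul_eq_mul]
              gcongr
              have hsub : B.filter (fun b' => ∃ lam : ZMod p, b' = lam • b)
                  ⊆ Finset.image (fun u : (ZMod p)ˣ => (u : ZMod p) • b) univ := by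
                intro b' hb'
                rw [Finset.mem_filter] at hb'
                obtain ⟨hbB, lam, rfl⟩ := hb'
                have hlam : lam ≠ 0 := by
                  rintro rfl
                  exact hB0 _ hbB (by simp)
                exact Finset.mem_image.mpr ⟨Units.mk0 lam hlam, Finset.mem_univ _, rfl⟩
              have himg : (Finset.image (fun u : (ZMod p)ˣ => (u : ZMod p) • b)
                  univ).card ≤ p - 1 := by
                refine Finset.card_image_le.trans ?_
                rw [Finset.card_univ, ZMod.card_units p]
              exact (Finset.card_le_card hsub).trans himg
      have hbd2 : ∑ b' ∈ B.filter (fun b' => ¬∃ lam : ZMod p, b' = lam • b),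
          (univ.filter fun a => ip a b = 0 ∧ ip a b' = 0).card
          ≤ B.card * p ^ (t - 2) := by
        calc ∑ b' ∈ B.filter (fun b' => ¬∃ lam : ZMod p, b' = lam • b),
            (univ.filter fun a => ip a b = 0 ∧ ip a b' = 0).card
            ≤ ∑ _b' ∈ B.filter (fun b' => ¬∃ lam : ZMod p, b' = lam • b), p ^ (t - 2) := by
              refine Finset.sum_le_sum fun b' hb' => ?_
              rw [Finset.mem_filter] at hb'
              obtain ⟨hbB, hnp⟩ := hb'
              push_neg at hnp
              exact le_of_eq (card_ip_zero_pair (hB0 b hb) (hB0 b' hbB) hnp)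
          _ ≤ B.card * p ^ (t - 2) := by
              rw [Finset.sum_const, smul_eq_mul]
              gcongr
              exact Finset.filter_subset (fun b' => ¬∃ lam : ZMod p, b' = lam • b) B
      omega
    calc ∑ b ∈ B, ∑ a : Fin t → ZMod p, ∑ b' ∈ B,
        (if ip a b = 0 ∧ ip a b' = 0 then 1 else 0)
        ≤ ∑ _b ∈ B, ((p - 1) * p ^ (t - 1) + B.card * p ^ (t - 2)) :=
          Finset.sum_le_sum hswap
      _ = B.card * ((p - 1) * p ^ (t - 1) + B.card * p ^ (t - 2)) := by
          rw [Finset.sum_const, smul_eq_mul]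
  -- pass to ℤ
  have hcardV : Fintype.card (Fin t → ZMod p) = p ^ t := by simp [ZMod.card]
  have hqt : ((p:ℤ)) * (p:ℤ) ^ (t - 1) = (p:ℤ) ^ t := by
    rw [← pow_succ']; congr 1; omega
  have hS1' : ∑ a : Fin t → ZMod p, ((N a : ℤ)) = (B.card : ℤ) * (p:ℤ) ^ (t - 1) := by
    exact_mod_cast hS1
  have hS2' : (∑ a : Fin t → ZMod p, (N a : ℤ) ^ 2)
      ≤ (B.card : ℤ) * (((p:ℤ) - 1) * (p:ℤ) ^ (t - 1) + (B.card : ℤ) * (p:ℤ) ^ (t - 2)) := by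
    have h := hS2
    zify [show (1:ℕ) ≤ p by omega] at h
    exact h
  have hident : ∑ a : Fin t → ZMod p, ((p:ℤ) * (N a : ℤ) - (B.card : ℤ)) ^ 2
      = (p:ℤ) ^ 2 * (∑ a : Fin t → ZMod p, (N a : ℤ) ^ 2) - (p:ℤ) ^ t * (B.card : ℤ) ^ 2 := by
    have hexp : ∀ a : Fin t → ZMod p, ((p:ℤ) * (N a : ℤ) - (B.card : ℤ)) ^ 2
        = (p:ℤ) ^ 2 * (N a : ℤ) ^ 2 - 2 * (p:ℤ) * (B.card : ℤ) * (N a : ℤ)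
          + (B.card : ℤ) ^ 2 := fun a => by ring
    rw [Finset.sum_congr rfl fun a _ => hexp a]
    rw [Finset.sum_add_distrib, Finset.sum_sub_distrib, ← Finset.mul_sum, ← Finset.mul_sum,
      hS1', Finset.sum_const, Finset.card_univ, hcardV, nsmul_eq_mul]
    push_cast
    linear_combination (-2 * (B.card:ℤ) ^ 2) * hqt
  have hlow : (A.card : ℤ) * (B.card : ℤ) ^ 2
      ≤ ∑ a : Fin t → ZMod p, ((p:ℤ) * (N a : ℤ) - (B.card : ℤ)) ^ 2 := by
    have h1 : ∀ a ∈ A, ((p:ℤ) * (N a : ℤ) - (B.card : ℤ)) ^ 2 = (B.card : ℤ) ^ 2 := by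
      intro a ha; rw [hNA a ha]; push_cast; ring
    have h2 : (A.card : ℤ) * (B.card : ℤ) ^ 2
        = ∑ a ∈ A, ((p:ℤ) * (N a : ℤ) - (B.card : ℤ)) ^ 2 := by
      rw [Finset.sum_congr rfl h1, Finset.sum_const, nsmul_eq_mul]
    rw [h2]
    exact Finset.sum_le_sum_of_subset_of_nonneg (Finset.subset_univ A)
      (fun a _ _ => sq_nonneg _)
  -- combine
  have h1 : (p:ℤ) ^ 2 * (((p:ℤ) - 1) * (p:ℤ) ^ (t - 1)) = ((p:ℤ) - 1) * (p:ℤ) ^ (t + 1) := by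
    rw [show (p:ℤ) ^ 2 * (((p:ℤ)-1) * (p:ℤ) ^ (t-1)) = ((p:ℤ)-1) * ((p:ℤ)^2 * (p:ℤ)^(t-1)) by
      ring, ← pow_add]
    congr 2
    omega
  have h2 : (p:ℤ) ^ 2 * (p:ℤ) ^ (t - 2) = (p:ℤ) ^ t := by
    rw [← pow_add]; congr 1; omega
  have hmul : (p:ℤ) ^ 2 * (∑ a : Fin t → ZMod p, (N a : ℤ) ^ 2)
      ≤ (B.card:ℤ) * (((p:ℤ) - 1) * (p:ℤ) ^ (t + 1)) + (B.card:ℤ) ^ 2 * (p:ℤ) ^ t := by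
    calc (p:ℤ) ^ 2 * (∑ a : Fin t → ZMod p, (N a : ℤ) ^ 2)
        ≤ (p:ℤ) ^ 2 * ((B.card : ℤ) * (((p:ℤ) - 1) * (p:ℤ) ^ (t - 1)
            + (B.card : ℤ) * (p:ℤ) ^ (t - 2))) :=
          mul_le_mul_of_nonneg_left hS2' (by positivity)
      _ = (B.card:ℤ) * ((p:ℤ) ^ 2 * (((p:ℤ) - 1) * (p:ℤ) ^ (t - 1)))
            + (B.card:ℤ) ^ 2 * ((p:ℤ) ^ 2 * (p:ℤ) ^ (t - 2)) := by ring
      _ = (B.card:ℤ) * (((p:ℤ) - 1) * (p:ℤ) ^ (t + 1)) + (B.card:ℤ) ^ 2 * (p:ℤ) ^ t := by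
          rw [h1, h2]
  have hBc1 : (1:ℤ) ≤ (B.card : ℤ) := by exact_mod_cast Finset.card_pos.mpr hBne
  have hstep : (A.card:ℤ) * (B.card:ℤ) ^ 2 ≤ (B.card:ℤ) * (((p:ℤ) - 1) * (p:ℤ) ^ (t + 1)) := by
    nlinarith [hlow, hident, hmul]
  have hfin : (A.card:ℤ) * (B.card:ℤ) ≤ ((p:ℤ) - 1) * (p:ℤ) ^ (t + 1) := by
    have h3 : ((A.card:ℤ) * (B.card:ℤ)) * (B.card:ℤ)
        ≤ (((p:ℤ) - 1) * (p:ℤ) ^ (t + 1)) * (B.card:ℤ) := by nlinarith [hstep]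
    exact le_of_mul_le_mul_right h3 (by omega)
  have hfinal : (A.card:ℤ) * (B.card:ℤ) ≤ (p:ℤ) ^ (t + 2) := by
    have hnn : (0:ℤ) ≤ (p:ℤ) ^ (t + 1) := by positivity
    calc (A.card:ℤ) * (B.card:ℤ) ≤ ((p:ℤ) - 1) * (p:ℤ) ^ (t + 1) := hfin
      _ ≤ (p:ℤ) * (p:ℤ) ^ (t + 1) := by nlinarith
      _ = (p:ℤ) ^ (t + 2) := by rw [← pow_succ']
  exact_mod_cast hfinal

end Cross

section Constr

variable {p : ℕ} [Fact p.Prime] {t : ℕ}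

/-- The map `v ↦ (v^{⊗(p-1)}, 1, …, 1)`. -/
def gmap (p t : ℕ) (v : Fin t → ZMod p) : ((Fin (p-1) → Fin t) ⊕ Fin (p-1)) → ZMod p :=
  Sum.elim (fun f => ∏ k, v (f k)) (fun _ => 1)

lemma ip_gmap (v w : Fin t → ZMod p) :
    ip (gmap p t v) (gmap p t w) = (ip v w) ^ (p - 1) - 1 := by
  have hp2 : 2 ≤ p := (Fact.out : p.Prime).two_le
  rw [ip, Fintype.sum_sum_type]
  have h2 : ∑ x : Fin (p-1), (gmap p t v (Sum.inr x) * gmap p t w (Sum.inr x))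
      = ((p - 1 : ℕ) : ZMod p) := by
    simp [gmap]
  have h1 : ∑ f : Fin (p-1) → Fin t, (gmap p t v (Sum.inl f) * gmap p t w (Sum.inl f))
      = (ip v w) ^ (p - 1) := by
    have hterm : ∀ f : Fin (p-1) → Fin t, gmap p t v (Sum.inl f) * gmap p t w (Sum.inl f)
        = ∏ k, (v (f k) * w (f k)) := by
      intro f; simp [gmap, Finset.prod_mul_distrib]
    rw [Finset.sum_congr rfl fun f _ => hterm f]
    have key := Finset.prod_univ_sum (fun _ : Fin (p-1) => (univ : Finset (Fin t)))
      (fun _ j => v j * w j)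
    rw [Fintype.piFinset_univ] at key
    rw [← key, ip, Finset.prod_const, Finset.card_univ, Fintype.card_fin]
  rw [h1, h2]
  have hcast : ((p - 1 : ℕ) : ZMod p) = -1 := by
    rw [Nat.cast_sub (by omega : 1 ≤ p)]
    simp
  rw [hcast]
  ring

lemma gmap_ip_zero_iff (v w : Fin t → ZMod p) :
    ip (gmap p t v) (gmap p t w) = 0 ↔ ip v w ≠ 0 := by
  have hp2 : 2 ≤ p := (Fact.out : p.Prime).two_le
  rw [ip_gmap, sub_eq_zero]
  constructor
  · intro h1 h0
    rw [h0, zero_pow (by omega : p - 1 ≠ 0)] at h1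
    exact zero_ne_one h1
  · intro hne
    exact ZMod.pow_card_sub_one_eq_one hne

lemma span_orth {ι : Type*} [Fintype ι] {R1 R2 : Set (ι → ZMod p)}
    (h : ∀ x ∈ R1, ∀ y ∈ R2, ip x y = 0) :
    ∀ v ∈ Submodule.span (ZMod p) R1, ∀ w ∈ Submodule.span (ZMod p) R2, ip v w = 0 := by
  intro v hv w hw
  have h1 : ∀ x ∈ R1, ip x w = 0 := by
    intro x hx
    have hle : Submodule.span (ZMod p) R2 ≤ LinearMap.ker (ipL x) := by
      rw [Submodule.span_le]
      intro y hy
      rw [SetLike.mem_coe, LinearMap.mem_ker, ipL_apply, ip_comm]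
      exact h x hx y hy
    have h2 := hle hw
    rw [LinearMap.mem_ker, ipL_apply] at h2
    rw [ip_comm]; exact h2
  have hle : Submodule.span (ZMod p) R1 ≤ LinearMap.ker (ipL w) := by
    rw [Submodule.span_le]
    intro x hx
    rw [SetLike.mem_coe, LinearMap.mem_ker, ipL_apply]
    exact h1 x hx
  have h2 := hle hv
  rwa [LinearMap.mem_ker, ipL_apply] at h2

lemma exists_span_param {ι : Type*} [Fintype ι] {M : ℕ}
    (hM : Fintype.card ι ≤ M) (g : (Fin t → ZMod p) → (ι → ZMod p))
    (A : Finset (Fin t → ZMod p)) (hA : A.Nonempty) :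
    ∃ L : Fin M → (Fin t → ZMod p), (∀ i, L i ∈ A) ∧
      Submodule.span (ZMod p) (Set.range (g ∘ L)) = Submodule.span (ZMod p) (g '' ↑A) := by
  classical
  obtain ⟨a₀, ha₀⟩ := hA
  obtain ⟨s, hsub, hspan, hli⟩ := exists_linearIndependent (ZMod p) (g '' (↑A : Set _))
  have hsfin : s.Finite := ((A.finite_toSet).image g).subset hsub
  haveI := hsfin.fintype
  have hcard : s.toFinset.card ≤ M := by
    have h1 : Module.finrank (ZMod p) (Submodule.span (ZMod p) s) = s.toFinset.card :=
      finrank_span_set_eq_card hli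
    have h2 := Submodule.finrank_le (Submodule.span (ZMod p) s)
    rw [h1, Module.finrank_pi] at h2
    omega
  have hpre : ∀ x ∈ s.toFinset, ∃ a, a ∈ A ∧ g a = x := by
    intro x hx
    rw [Set.mem_toFinset] at hx
    obtain ⟨a, haA, rfl⟩ := hsub hx
    exact ⟨a, haA, rfl⟩
  choose pre hpreA hpreg using hpre
  set n := s.toFinset.card with hn
  have e : { x // x ∈ s.toFinset } ≃ Fin n := s.toFinset.equivFin
  refine ⟨fun i => if h : (i : ℕ) < n then pre ((e.symm ⟨i, h⟩) : _) (e.symm ⟨i, h⟩).2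
    else a₀, ?_, ?_⟩
  · intro i
    by_cases h : (i : ℕ) < n
    · simp only [dif_pos h]; exact hpreA _ _
    · simp only [dif_neg h]; exact ha₀
  · apply le_antisymm
    · rw [Submodule.span_le]
      rintro _ ⟨i, rfl⟩
      by_cases h : (i : ℕ) < n
      · simp only [Function.comp_apply, dif_pos h]
        rw [hpreg _ _]
        refine Submodule.subset_span (hsub ?_)
        exact Set.mem_toFinset.mp (e.symm ⟨(i : ℕ), h⟩).2
      · simp only [Function.comp_apply, dif_neg h]
        exact Submodule.subset_span ⟨a₀, ha₀, rfl⟩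
    · rw [← hspan]
      apply Submodule.span_mono
      intro x hx
      have hxf : x ∈ s.toFinset := Set.mem_toFinset.mpr hx
      refine ⟨Fin.castLE hcard (e ⟨x, hxf⟩), ?_⟩
      have hlt : ((Fin.castLE hcard (e ⟨x, hxf⟩) : Fin M) : ℕ) < n :=
        by simp
      simp only [Function.comp_apply, dif_pos hlt]
      have heq : (⟨((Fin.castLE hcard (e ⟨x, hxf⟩) : Fin M) : ℕ), hlt⟩ : Fin n)
          = e ⟨x, hxf⟩ := by
        apply Fin.ext; simp
      rw [heq, Equiv.symm_apply_apply]
      exact hpreg _ _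

end Constr

/-- for a prime `p` and `t ≥ 2`, there is a collection `𝒞` of pairs
of subsets of `F_p^t` with `|𝒞| ≤ p^{2t(t^{p-1}+p-1)}`, such that every
`(C1, C2) ∈ 𝒞` satisfies `|C1| ⋅ |C2| ≤ p^{t+2}`, and every pair `(A1, A2)` of
subsets with `⟨v1, v2⟩ ≠ 0` for all `v1 ∈ A1`, `v2 ∈ A2` is contained in some
pair of `𝒞`. -/
theorem exists_covering_collection {p t : ℕ} (hp : p.Prime) (ht : 2 ≤ t) :
    ∃ 𝒞 : Finset (Finset (Fin t → ZMod p) × Finset (Fin t → ZMod p)),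
      𝒞.card ≤ p ^ (2 * t * (t ^ (p - 1) + p - 1)) ∧
      (∀ C ∈ 𝒞, C.1.card * C.2.card ≤ p ^ (t + 2)) ∧
      (∀ A1 A2 : Finset (Fin t → ZMod p),
        (∀ v1 ∈ A1, ∀ v2 ∈ A2, ip v1 v2 ≠ 0) →
        ∃ C ∈ 𝒞, A1 ⊆ C.1 ∧ A2 ⊆ C.2) := by
  classical
  haveI : Fact p.Prime := ⟨hp⟩
  have hp2 : 2 ≤ p := hp.two_le
  set M : ℕ := t ^ (p - 1) + (p - 1) with hM
  have hMpos : 0 < M := by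
    rw [hM]
    exact Nat.lt_of_lt_of_le (by omega : 0 < p - 1) (Nat.le_add_left _ _)
  have hcardι : Fintype.card ((Fin (p-1) → Fin t) ⊕ Fin (p-1)) = M := by
    rw [hM]; simp
  set g : (Fin t → ZMod p) → (((Fin (p-1) → Fin t) ⊕ Fin (p-1)) → ZMod p) := gmap p t with hg
  set F : ((Fin M → Fin t → ZMod p) × (Fin M → Fin t → ZMod p)) →
      (Finset (Fin t → ZMod p) × Finset (Fin t → ZMod p)) := fun L =>
    if ∀ i j, ip (g (L.1 i)) (g (L.2 j)) = 0 then
      (univ.filter (fun v => g v ∈ Submodule.span (ZMod p) (Set.range (g ∘ L.1))),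
       univ.filter (fun v => g v ∈ Submodule.span (ZMod p) (Set.range (g ∘ L.2))))
    else if L.1 = 0 then (∅, univ) else (univ, ∅) with hF
  refine ⟨Finset.image F univ, ?_, ?_, ?_⟩
  · -- cardinality bound
    refine Finset.card_image_le.trans ?_
    rw [Finset.card_univ, Fintype.card_prod]
    have hV : Fintype.card (Fin t → ZMod p) = p ^ t := by simp [ZMod.card]
    have hFn : Fintype.card (Fin M → Fin t → ZMod p) = p ^ (t * M) := by
      rw [Fintype.card_fun, hV, Fintype.card_fin, ← pow_mul]
    rw [hFn, ← pow_add]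
    apply Nat.pow_le_pow_right (by omega)
    have h9 : t ^ (p - 1) + p - 1 = t ^ (p - 1) + (p - 1) :=
      Nat.add_sub_assoc (by omega) _
    rw [h9]
    exact le_of_eq (by ring)
  · -- size bound
    intro C hC
    rw [Finset.mem_image] at hC
    obtain ⟨L, -, rfl⟩ := hC
    by_cases hOrth : ∀ i j, ip (g (L.1 i)) (g (L.2 j)) = 0
    · rw [hF]
      simp only [if_pos hOrth]
      apply cross_bound ht
      intro v hv w hw
      rw [Finset.mem_filter] at hv hw
      have h0 : ip (g v) (g w) = 0 := by
        refine span_orth ?_ (g v) hv.2 (g w) hw.2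
        rintro x ⟨i, rfl⟩ y ⟨j, rfl⟩
        exact hOrth i j
      rw [hg] at h0
      exact (gmap_ip_zero_iff v w).mp h0
    · rw [hF]
      simp only [if_neg hOrth]
      by_cases hL : L.1 = 0 <;> simp [hL]
  · -- covering
    intro A1 A2 h
    rcases A1.eq_empty_or_nonempty with hA1 | hA1ne
    · -- A1 empty : use the pair (∅, univ)
      have hcond : ¬ ∀ i j : Fin M, ip (g (((0,0) :
          (Fin M → Fin t → ZMod p) × (Fin M → Fin t → ZMod p)).1 i))
          (g (((0,0) : (Fin M → Fin t → ZMod p) × (Fin M → Fin t → ZMod p)).2 j)) = 0 := by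
      -- simplify
        intro hcon
        have h1 := hcon ⟨0, hMpos⟩ ⟨0, hMpos⟩
        rw [hg] at h1
        rw [gmap_ip_zero_iff] at h1
        exact h1 (ip_zero_right _)
      have hFv : F (0, 0) = (∅, univ) := by
        rw [hF]
        simp only [if_neg hcond]
        simp
      exact ⟨F (0, 0), Finset.mem_image_of_mem F (Finset.mem_univ _),
        by rw [hFv, hA1], by rw [hFv]; exact Finset.subset_univ _⟩
    rcases A2.eq_empty_or_nonempty with hA2 | hA2ne
    · -- A2 empty : use the pair (univ, ∅)
      set L1 : Fin M → Fin t → ZMod p := fun _ _ => 1 with hL1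
      have hcond : ¬ ∀ i j : Fin M, ip (g (((L1, 0) :
          (Fin M → Fin t → ZMod p) × (Fin M → Fin t → ZMod p)).1 i))
          (g (((L1, 0) : (Fin M → Fin t → ZMod p) × (Fin M → Fin t → ZMod p)).2 j)) = 0 := by
        intro hcon
        have h1 := hcon ⟨0, hMpos⟩ ⟨0, hMpos⟩
        rw [hg] at h1
        rw [gmap_ip_zero_iff] at h1
        exact h1 (ip_zero_right _)
      have hL1ne : L1 ≠ 0 := by
        intro h0
        have h1 := congrFun (congrFun h0 ⟨0, hMpos⟩) ⟨0, by omega⟩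
        exact one_ne_zero h1
      have hFv : F (L1, 0) = (univ, ∅) := by
        rw [hF]
        simp only [if_neg hcond]
        rw [if_neg hL1ne]
      exact ⟨F (L1, 0), Finset.mem_image_of_mem F (Finset.mem_univ _),
        by rw [hFv]; exact Finset.subset_univ _, by rw [hFv, hA2]⟩
    · -- main case
      obtain ⟨L1, hL1A, hspan1⟩ := exists_span_param (le_of_eq hcardι) g A1 hA1ne
      obtain ⟨L2, hL2A, hspan2⟩ := exists_span_param (le_of_eq hcardι) g A2 hA2ne
      have hOrth : ∀ i j, ip (g (((L1, L2) :
          (Fin M → Fin t → ZMod p) × (Fin M → Fin t → ZMod p)).1 i))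
          (g (((L1, L2) : (Fin M → Fin t → ZMod p) × (Fin M → Fin t → ZMod p)).2 j)) = 0 := by
        intro i j
        rw [hg, gmap_ip_zero_iff]
        exact h (L1 i) (hL1A i) (L2 j) (hL2A j)
      have hFv : F (L1, L2) =
          (univ.filter (fun v => g v ∈ Submodule.span (ZMod p) (Set.range (g ∘ L1))),
           univ.filter (fun v => g v ∈ Submodule.span (ZMod p) (Set.range (g ∘ L2)))) := by
        rw [hF]
        simp only [if_pos hOrth]
      refine ⟨F (L1, L2), Finset.mem_image_of_mem F (Finset.mem_univ _), ?_, ?_⟩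
      · rw [hFv]
        intro a ha
        rw [Finset.mem_filter]
        exact ⟨Finset.mem_univ _, by rw [hspan1]; exact Submodule.subset_span ⟨a, ha, rfl⟩⟩
      · rw [hFv]
        intro a ha
        rw [Finset.mem_filter]
        exact ⟨Finset.mem_univ _, by rw [hspan2]; exact Submodule.subset_span ⟨a, ha, rfl⟩⟩
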